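/- For a symmetric Boolean function f : {-1,1}^t → {-1,1}, viewed as a univariate function F on {0,1,…,t} of the Hamming weight, the sign-degree of f equals the number of indices k ∈ {0,…,t−1} with F(k) ≠ F(k+1) (the number of sign changes of F). -/

import Mathlib

open scoped Classical

noncomputable def sgnval (b : Bool) : ℝ := if b then 1 else -1

noncomputable def chi {n : ℕ} (S : Finset (Fin n)) (x : Fin n → Bool) : ℝ :=
  ∏ i ∈ S, sgnval (x i)

noncomputable def fourierCoef {n : ℕ} (f : (Fin n → Bool) → ℝ) (S : Finset (Fin n)) : ℝ :=
  (∑ x : Fin n → Bool, f x * chi S x) / 2 ^ n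

noncomputable def negweight {t : ℕ} (x : Fin t → Bool) : ℕ :=
  (Finset.univ.filter (fun i => x i = false)).card

noncomputable def sdeg {t : ℕ} (f : (Fin t → Bool) → ℝ) : ℕ :=
  sInf {d : ℕ | ∃ c : Finset (Fin t) → ℝ,
    (∀ S : Finset (Fin t), d < S.card → c S = 0) ∧
    ∀ x, 0 < f x * ∑ S : Finset (Fin t), c S * chi S x}

lemma sgnval_mul_self (b : Bool) : sgnval b * sgnval b = 1 := by
  cases b <;> norm_num [sgnval]

lemma chi_empty {n : ℕ} (x : Fin n → Bool) : chi ∅ x = 1 := by simp [chi]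

lemma chi_singleton {n : ℕ} (i : Fin n) (x : Fin n → Bool) : chi {i} x = sgnval (x i) := by
  simp [chi]

lemma chi_mul {n : ℕ} (S T : Finset (Fin n)) (x : Fin n → Bool) :
    chi S x * chi T x = chi (symmDiff S T) x := by
  classical
  have hS : chi S x = (∏ i ∈ S \ (S ∩ T), sgnval (x i)) * ∏ i ∈ S ∩ T, sgnval (x i) :=
    (Finset.prod_sdiff Finset.inter_subset_left).symm
  have hT : chi T x = (∏ i ∈ T \ (S ∩ T), sgnval (x i)) * ∏ i ∈ T ∩ S, sgnval (x i) := by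
    rw [Finset.inter_comm]
    exact (Finset.prod_sdiff Finset.inter_subset_left).symm
  have hsq : (∏ i ∈ S ∩ T, sgnval (x i)) * ∏ i ∈ T ∩ S, sgnval (x i) = 1 := by
    rw [Finset.inter_comm T S, ← Finset.prod_mul_distrib]
    exact Finset.prod_eq_one (fun i _ => sgnval_mul_self _)
  have h1 : S \ (S ∩ T) = S \ T := by simp [Finset.sdiff_inter_self_left]
  have h2 : T \ (S ∩ T) = T \ S := by
    rw [Finset.inter_comm]; simp [Finset.sdiff_inter_self_left]
  have hdisj : Disjoint (S \ T) (T \ S) := disjoint_sdiff_sdiff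
  have hchi : chi (symmDiff S T) x = (∏ i ∈ S \ T, sgnval (x i)) * ∏ i ∈ T \ S, sgnval (x i) := by
    rw [chi, symmDiff_def, Finset.sup_eq_union, Finset.prod_union hdisj]
  rw [hchi, hS, hT, h1, h2]
  linear_combination (∏ i ∈ S \ T, sgnval (x i)) * (∏ i ∈ T \ S, sgnval (x i)) * hsq

/-- Functions representable with coefficients supported on sets of size ≤ d. -/
def DegLE (t d : ℕ) (g : (Fin t → Bool) → ℝ) : Prop :=
  ∃ c : Finset (Fin t) → ℝ,
    (∀ S : Finset (Fin t), d < S.card → c S = 0) ∧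
    ∀ x, g x = ∑ S : Finset (Fin t), c S * chi S x

lemma DegLE.mono {t d d' : ℕ} {g} (h : DegLE t d g) (hdd : d ≤ d') : DegLE t d' g := by
  obtain ⟨c, hc, hg⟩ := h
  exact ⟨c, fun S hS => hc S (lt_of_le_of_lt hdd hS), hg⟩

lemma DegLE.add {t d : ℕ} {g h} (hg : DegLE t d g) (hh : DegLE t d h) :
    DegLE t d (fun x => g x + h x) := by
  obtain ⟨c, hc, hgc⟩ := hg
  obtain ⟨e, he, hhe⟩ := hh
  refine ⟨fun S => c S + e S, fun S hS => by simp [hc S hS, he S hS], fun x => ?_⟩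
  show g x + h x = _
  simp only [hgc, hhe, add_mul, Finset.sum_add_distrib]

lemma DegLE.const {t : ℕ} (a : ℝ) : DegLE t 0 (fun _ => a) := by
  refine ⟨fun S => if S = ∅ then a else 0, fun S hS => ?_, fun x => ?_⟩
  · rcases Finset.card_pos.mp hS with ⟨i, hi⟩
    simp only [ite_eq_right_iff]
    rintro rfl; simp at hi
  · rw [Finset.sum_eq_single ∅]
    · simp [chi_empty]
    · intro S _ hS; simp [hS]
    · simp

lemma DegLE.single {t : ℕ} (i : Fin t) : DegLE t 1 (fun x => sgnval (x i)) := by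
  refine ⟨fun S => if S = {i} then 1 else 0, fun S hS => ?_, fun x => ?_⟩
  · simp only [ite_eq_right_iff]
    rintro rfl; simp at hS
  · rw [Finset.sum_eq_single {i}]
    · simp [chi_singleton]
    · intro S _ hS; simp [hS]
    · simp

lemma DegLE.smul {t d : ℕ} {g} (a : ℝ) (h : DegLE t d g) : DegLE t d (fun x => a * g x) := by
  obtain ⟨c, hc, hg⟩ := h
  refine ⟨fun S => a * c S, fun S hS => by simp [hc S hS], fun x => ?_⟩
  show a * g x = _
  rw [hg, Finset.mul_sum]
  exact Finset.sum_congr rfl (fun S _ => by ring)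

lemma DegLE.mul {t d₁ d₂ : ℕ} {g h} (hg : DegLE t d₁ g) (hh : DegLE t d₂ h) :
    DegLE t (d₁ + d₂) (fun x => g x * h x) := by
  classical
  obtain ⟨c, hc, hgc⟩ := hg
  obtain ⟨e, he, hhe⟩ := hh
  refine ⟨fun U => ∑ S : Finset (Fin t), ∑ T : Finset (Fin t),
      if symmDiff S T = U then c S * e T else 0, fun U hU => ?_, fun x => ?_⟩
  · apply Finset.sum_eq_zero; intro S _
    apply Finset.sum_eq_zero; intro T _
    split_ifs with hST
    · by_cases hS : d₁ < S.card
      · rw [hc S hS, zero_mul]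
      by_cases hT : d₂ < T.card
      · rw [he T hT, mul_zero]
      exfalso
      push_neg at hS hT
      have : (symmDiff S T).card ≤ S.card + T.card := by
        rw [symmDiff_def, Finset.sup_eq_union]
        refine le_trans (Finset.card_union_le _ _) ?_
        exact add_le_add (Finset.card_le_card Finset.sdiff_subset)
          (Finset.card_le_card Finset.sdiff_subset)
      rw [hST] at this
      omega
    · rfl
  · show g x * h x = _
    symm
    calc ∑ U : Finset (Fin t), (∑ S : Finset (Fin t), ∑ T : Finset (Fin t),
            if symmDiff S T = U then c S * e T else 0) * chi U x
        = ∑ U : Finset (Fin t), ∑ S : Finset (Fin t), ∑ T : Finset (Fin t),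
            (if symmDiff S T = U then c S * e T * chi U x else 0) := by
          simp [Finset.sum_mul, ite_mul]
      _ = ∑ S : Finset (Fin t), ∑ T : Finset (Fin t), ∑ U : Finset (Fin t),
            (if symmDiff S T = U then c S * e T * chi U x else 0) := by
          rw [Finset.sum_comm]
          exact Finset.sum_congr rfl fun S _ => Finset.sum_comm
      _ = ∑ S : Finset (Fin t), ∑ T : Finset (Fin t), c S * e T * chi (symmDiff S T) x := by
          refine Finset.sum_congr rfl fun S _ => Finset.sum_congr rfl fun T _ => ?_
          rw [Finset.sum_ite_eq]
          simp
      _ = ∑ S : Finset (Fin t), ∑ T : Finset (Fin t), (c S * chi S x) * (e T * chi T x) := by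
          refine Finset.sum_congr rfl fun S _ => Finset.sum_congr rfl fun T _ => ?_
          rw [← chi_mul]
          ring
      _ = g x * h x := by rw [hgc, hhe, Finset.sum_mul_sum]

lemma sum_sgnval {t : ℕ} (x : Fin t → Bool) :
    ∑ i, sgnval (x i) = (t : ℝ) - 2 * negweight x := by
  have h : ∀ i, sgnval (x i) = 1 - 2 * (if x i = false then (1:ℝ) else 0) := by
    intro i; cases hxi : x i <;> norm_num [sgnval]
  rw [Finset.sum_congr rfl (fun i _ => h i), Finset.sum_sub_distrib, ← Finset.mul_sum,
    Finset.sum_boole, negweight]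
  simp [mul_comm]

lemma negweight_le {t : ℕ} (x : Fin t → Bool) : negweight x ≤ t := by
  simpa [negweight] using Finset.card_filter_le Finset.univ (fun i => x i = false)

lemma DegLE.finsum {t d : ℕ} {ι : Type*} (s : Finset ι) (g : ι → (Fin t → Bool) → ℝ)
    (h : ∀ i ∈ s, DegLE t d (g i)) : DegLE t d (fun x => ∑ i ∈ s, g i x) := by
  classical
  induction s using Finset.induction_on with
  | empty => simpa using ((DegLE.const 0 : DegLE t 0 _).mono (Nat.zero_le d))
  | insert _ _ hni ih =>
    rename_i a s'
    simp only [Finset.sum_insert hni]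
    exact (h a (Finset.mem_insert_self _ _)).add
      (ih (fun i hi => h i (Finset.mem_insert_of_mem hi)))

lemma DegLE.prod {t : ℕ} {ι : Type*} (s : Finset ι) (g : ι → (Fin t → Bool) → ℝ)
    (h : ∀ i ∈ s, DegLE t 1 (g i)) : DegLE t s.card (fun x => ∏ i ∈ s, g i x) := by
  classical
  induction s using Finset.induction_on with
  | empty => simpa using (DegLE.const 1 : DegLE t 0 _)
  | insert _ _ hni ih =>
    rename_i a s'
    simp only [Finset.prod_insert hni, Finset.card_insert_of_notMem hni]
    have := (h a (Finset.mem_insert_self _ _)).mul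
      (ih (fun i hi => h i (Finset.mem_insert_of_mem hi)))
    simpa [add_comm] using this

lemma degle_linear_negweight {t : ℕ} (a : ℝ) :
    DegLE t 1 (fun x => a - (negweight x : ℝ)) := by
  have h1 : DegLE t 1 (fun x => (1/2 : ℝ) * ∑ i, sgnval (x i)) :=
    DegLE.smul _ (DegLE.finsum Finset.univ _ (fun i _ => DegLE.single i))
  have h2 : DegLE t 1 (fun _ => a - (t:ℝ)/2) := (DegLE.const _).mono (by norm_num)
  have := h2.add h1
  have heq : ∀ x : Fin t → Bool,
      (a - (t:ℝ)/2) + (1/2 : ℝ) * ∑ i, sgnval (x i) = a - (negweight x : ℝ) := by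
    intro x; rw [sum_sgnval]; ring
  simpa only [heq] using this

section upper
variable {t : ℕ} (F : ℕ → ℝ)

noncomputable def chg (t : ℕ) (F : ℕ → ℝ) : Finset ℕ :=
  (Finset.range t).filter (fun k => F k ≠ F (k + 1))

lemma chg_card_succ (w : ℕ) :
    ((chg t F).filter (· < w + 1)).card
      = ((chg t F).filter (· < w)).card + if w ∈ chg t F then 1 else 0 := by
  classical
  have : (chg t F).filter (· < w + 1) = (chg t F).filter (· < w) ∪ (chg t F).filter (· = w) := by
    rw [← Finset.filter_or]
    exact Finset.filter_congr (fun k _ => by omega)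
  rw [this, Finset.card_union_of_disjoint, Finset.filter_eq']
  · split_ifs <;> simp
  · rw [Finset.disjoint_filter]
    intro k _ hk hk2; omega

lemma F_sign (hF : ∀ k ≤ t, F k = 1 ∨ F k = -1) :
    ∀ w ≤ t, F w = F 0 * (-1 : ℝ) ^ ((chg t F).filter (· < w)).card := by
  intro w
  induction w with
  | zero => intro _; simp
  | succ w ih =>
    intro hw
    have hw' : w ≤ t := by omega
    rw [chg_card_succ]
    by_cases hmem : w ∈ chg t F
    · have hne : F w ≠ F (w + 1) := (Finset.mem_filter.mp hmem).2
      have hFw : F (w + 1) = -F w := by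
        rcases hF w hw' with h1 | h1 <;> rcases hF (w+1) hw with h2 | h2 <;>
          simp only [h1, h2] at hne ⊢ <;> (norm_num at hne <;> norm_num)
      rw [hFw, ih hw', if_pos hmem, pow_succ]
      ring
    · have heq : F (w + 1) = F w := by
        by_contra hne
        exact hmem (Finset.mem_filter.mpr ⟨Finset.mem_range.mpr (by omega), fun h => hne h.symm⟩)
      rw [heq, ih hw', if_neg hmem, add_zero]

lemma prod_sign (w : ℕ) :
    0 < (-1 : ℝ) ^ ((chg t F).filter (· < w)).card
        * ∏ j ∈ chg t F, ((j : ℝ) + 1/2 - w) := by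
  classical
  rw [← Finset.prod_filter_mul_prod_filter_not (chg t F) (· < w)]
  set A := (chg t F).filter (· < w) with hA
  set B := (chg t F).filter (fun j => ¬ j < w) with hB
  have hP2 : 0 < ∏ j ∈ B, ((j:ℝ) + 1/2 - w) := by
    apply Finset.prod_pos
    intro j hj
    have h1 : w ≤ j := by
      have := (Finset.mem_filter.mp hj).2
      omega
    have : (w:ℝ) ≤ j := by exact_mod_cast h1
    linarith
  have hQ : 0 < ∏ j ∈ A, ((w:ℝ) - j - 1/2) := by
    apply Finset.prod_pos
    intro j hj
    have h1 : j < w := by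
      have := (Finset.mem_filter.mp hj).2
      omega
    have : (j:ℝ) + 1 ≤ w := by exact_mod_cast h1
    linarith
  have hP1 : ∏ j ∈ A, ((j:ℝ) + 1/2 - w) = (-1:ℝ)^A.card * ∏ j ∈ A, ((w:ℝ) - j - 1/2) := by
    rw [← Finset.prod_const (-1:ℝ), ← Finset.prod_mul_distrib]
    exact Finset.prod_congr rfl fun j _ => by ring
  rw [hP1]
  have hsq : (-1:ℝ)^A.card * (-1:ℝ)^A.card = 1 := by
    rw [← pow_add]
    exact Even.neg_one_pow (Even.add_self _)
  have key : (-1:ℝ)^A.card * ((-1:ℝ)^A.card * (∏ j ∈ A, ((w:ℝ) - j - 1/2))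
        * ∏ j ∈ B, ((j:ℝ) + 1/2 - w))
      = (∏ j ∈ A, ((w:ℝ) - j - 1/2)) * ∏ j ∈ B, ((j:ℝ) + 1/2 - w) := by
    linear_combination ((∏ j ∈ A, ((w:ℝ) - j - 1/2)) * ∏ j ∈ B, ((j:ℝ) + 1/2 - w)) * hsq
  rw [key]
  exact mul_pos hQ hP2

lemma upper_mem (f : (Fin t → Bool) → ℝ) (hF : ∀ k ≤ t, F k = 1 ∨ F k = -1)
    (hsym : ∀ x, f x = F (negweight x)) :
    ∃ c : Finset (Fin t) → ℝ,
      (∀ S : Finset (Fin t), (chg t F).card < S.card → c S = 0) ∧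
      ∀ x, 0 < f x * ∑ S : Finset (Fin t), c S * chi S x := by
  classical
  have hdeg : DegLE t (chg t F).card
      (fun x => F 0 * ∏ j ∈ chg t F, ((j:ℝ) + 1/2 - (negweight x : ℝ))) := by
    apply DegLE.smul
    apply DegLE.prod
    intro j _
    have := degle_linear_negweight (t := t) ((j:ℝ) + 1/2)
    simpa [sub_eq_add_neg, add_assoc] using this
  obtain ⟨c, hc, hg⟩ := hdeg
  refine ⟨c, hc, fun x => ?_⟩
  rw [← hg x]
  have hw : negweight x ≤ t := negweight_le x
  have hF0 : F 0 * F 0 = 1 := by rcases hF 0 (Nat.zero_le t) with h | h <;> rw [h] <;> norm_num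
  have hkey : f x * (F 0 * ∏ j ∈ chg t F, ((j:ℝ) + 1/2 - (negweight x : ℝ)))
      = (F 0 * F 0) * ((-1:ℝ) ^ ((chg t F).filter (· < negweight x)).card
          * ∏ j ∈ chg t F, ((j:ℝ) + 1/2 - (negweight x : ℝ))) := by
    rw [hsym x, F_sign F hF (negweight x) hw]
    ring
  rw [hkey, hF0, one_mul]
  exact prod_sign F (negweight x)
end upper

noncomputable def esym (t m : ℕ) (x : Fin t → Bool) : ℝ :=
  ∑ T ∈ Finset.powersetCard m (Finset.univ : Finset (Fin t)), chi T x

lemma esym_eq_zero {t m : ℕ} (h : t < m) (x : Fin t → Bool) : esym t m x = 0 := by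
  rw [esym, Finset.powersetCard_eq_empty.mpr (by simpa using h), Finset.sum_empty]

lemma e_rec (t m : ℕ) (x : Fin t → Bool) :
    (∑ i, sgnval (x i)) * esym t (m+1) x
      = ((m:ℝ)+2) * esym t (m+2) x + ((t:ℝ) - m) * esym t m x := by
  classical
  have expand : (∑ i, sgnval (x i)) * esym t (m+1) x
      = ∑ T ∈ Finset.powersetCard (m+1) (Finset.univ : Finset (Fin t)),
          ∑ i : Fin t, sgnval (x i) * chi T x := by
    rw [esym, Finset.mul_sum]
    exact Finset.sum_congr rfl fun T _ => by rw [Finset.sum_mul]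
  have split : ∀ T ∈ Finset.powersetCard (m+1) (Finset.univ : Finset (Fin t)),
      ∑ i : Fin t, sgnval (x i) * chi T x
        = (∑ i ∈ T, chi (T.erase i) x) + ∑ i ∈ Tᶜ, chi (insert i T) x := by
    intro T _
    rw [← Finset.sum_filter_add_sum_filter_not Finset.univ (· ∈ T)
      (fun i => sgnval (x i) * chi T x)]
    congr 1
    · have h1 : Finset.univ.filter (· ∈ T) = T := by ext i; simp
      rw [h1]
      apply Finset.sum_congr rfl
      intro i hi
      rw [chi, ← Finset.mul_prod_erase T _ hi, ← mul_assoc, sgnval_mul_self, one_mul]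
      rfl
    · have h1 : Finset.univ.filter (· ∉ T) = Tᶜ := by ext i; simp
      rw [h1]
      apply Finset.sum_congr rfl
      intro i hi
      rw [chi, chi, Finset.prod_insert (Finset.mem_compl.mp hi)]
  rw [expand, Finset.sum_congr rfl split, Finset.sum_add_distrib]
  have hA : ∑ T ∈ Finset.powersetCard (m+1) (Finset.univ : Finset (Fin t)),
      ∑ i ∈ T, chi (T.erase i) x = ((t:ℝ) - m) * esym t m x := by
    rw [Finset.sum_sigma' (Finset.powersetCard (m+1) (Finset.univ : Finset (Fin t)))
      (fun T => T) (fun T i => chi (T.erase i) x)]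
    rw [Finset.sum_nbij' (t := (Finset.powersetCard m (Finset.univ : Finset (Fin t))).sigma
          (fun V => Vᶜ))
      (i := fun p => ⟨p.1.erase p.2, p.2⟩) (j := fun p => ⟨insert p.2 p.1, p.2⟩)
      (g := fun p => chi p.1 x) ?_ ?_ ?_ ?_ ?_]
    · rw [Finset.sum_sigma]
      have : ∀ V ∈ Finset.powersetCard m (Finset.univ : Finset (Fin t)),
          ∑ _i ∈ Vᶜ, chi V x = ((t:ℝ) - m) * chi V x := by
        intro V hV
        rw [Finset.sum_const, Finset.card_compl,
          (Finset.mem_powersetCard_univ.mp hV), nsmul_eq_mul]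
        by_cases hmt : m ≤ t
        · rw [Fintype.card_fin, Nat.cast_sub hmt]
        · exfalso
          have := Finset.card_le_univ V
          rw [Finset.mem_powersetCard_univ.mp hV, Fintype.card_fin] at this
          omega
      rw [Finset.sum_congr rfl this, ← Finset.mul_sum, esym]
    · rintro ⟨T, i⟩ hp
      rw [Finset.mem_sigma] at hp ⊢
      obtain ⟨hT, hi⟩ := hp
      refine ⟨Finset.mem_powersetCard_univ.mpr ?_, Finset.mem_compl.mpr (Finset.notMem_erase _ _)⟩
      rw [Finset.card_erase_of_mem hi, Finset.mem_powersetCard_univ.mp hT]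
      omega
    · rintro ⟨V, i⟩ hp
      rw [Finset.mem_sigma] at hp ⊢
      obtain ⟨hV, hi⟩ := hp
      refine ⟨Finset.mem_powersetCard_univ.mpr ?_, Finset.mem_insert_self _ _⟩
      rw [Finset.card_insert_of_notMem (Finset.mem_compl.mp hi),
        Finset.mem_powersetCard_univ.mp hV]
    · rintro ⟨T, i⟩ hp
      rw [Finset.mem_sigma] at hp
      simp [Finset.insert_erase hp.2]
    · rintro ⟨V, i⟩ hp
      rw [Finset.mem_sigma] at hp
      simp [Finset.erase_insert (Finset.mem_compl.mp hp.2)]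
    · rintro ⟨T, i⟩ _
      rfl
  have hB : ∑ T ∈ Finset.powersetCard (m+1) (Finset.univ : Finset (Fin t)),
      ∑ i ∈ Tᶜ, chi (insert i T) x = ((m:ℝ)+2) * esym t (m+2) x := by
    rw [Finset.sum_sigma' (Finset.powersetCard (m+1) (Finset.univ : Finset (Fin t)))
      (fun T => Tᶜ) (fun T i => chi (insert i T) x)]
    rw [Finset.sum_nbij' (t := (Finset.powersetCard (m+2) (Finset.univ : Finset (Fin t))).sigma
          (fun U => U))
      (i := fun p => ⟨insert p.2 p.1, p.2⟩) (j := fun p => ⟨p.1.erase p.2, p.2⟩)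
      (g := fun p => chi p.1 x) ?_ ?_ ?_ ?_ ?_]
    · rw [Finset.sum_sigma]
      have : ∀ U ∈ Finset.powersetCard (m+2) (Finset.univ : Finset (Fin t)),
          ∑ _i ∈ U, chi U x = ((m:ℝ)+2) * chi U x := by
        intro U hU
        rw [Finset.sum_const, Finset.mem_powersetCard_univ.mp hU, nsmul_eq_mul]
        push_cast
        ring
      rw [Finset.sum_congr rfl this, ← Finset.mul_sum, esym]
    · rintro ⟨T, i⟩ hp
      rw [Finset.mem_sigma] at hp ⊢
      obtain ⟨hT, hi⟩ := hp
      refine ⟨Finset.mem_powersetCard_univ.mpr ?_, Finset.mem_insert_self _ _⟩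
      rw [Finset.card_insert_of_notMem (Finset.mem_compl.mp hi),
        Finset.mem_powersetCard_univ.mp hT]
    · rintro ⟨U, i⟩ hp
      rw [Finset.mem_sigma] at hp ⊢
      obtain ⟨hU, hi⟩ := hp
      refine ⟨Finset.mem_powersetCard_univ.mpr ?_, Finset.mem_compl.mpr (Finset.notMem_erase _ _)⟩
      rw [Finset.card_erase_of_mem hi, Finset.mem_powersetCard_univ.mp hU]
      omega
    · rintro ⟨T, i⟩ hp
      rw [Finset.mem_sigma] at hp
      simp [Finset.erase_insert (Finset.mem_compl.mp hp.2)]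
    · rintro ⟨U, i⟩ hp
      rw [Finset.mem_sigma] at hp
      simp [Finset.insert_erase hp.2]
    · rintro ⟨T, i⟩ _
      rfl
  rw [hA, hB]
  ring

noncomputable def Kpoly (t : ℕ) : ℕ → Polynomial ℝ
  | 0 => 1
  | 1 => Polynomial.C (t:ℝ) - Polynomial.C 2 * Polynomial.X
  | (m+2) => Polynomial.C (((m:ℝ)+2)⁻¹) *
      ((Polynomial.C (t:ℝ) - Polynomial.C 2 * Polynomial.X) * Kpoly t (m+1)
        - Polynomial.C ((t:ℝ) - m) * Kpoly t m)

lemma Kpoly_one_natDegree_le (t : ℕ) : (Kpoly t 1).natDegree ≤ 1 := by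
  rw [Kpoly]
  refine le_trans (Polynomial.natDegree_sub_le _ _) ?_
  simp only [Polynomial.natDegree_C, sup_le_iff]
  refine ⟨Nat.zero_le _, le_trans (Polynomial.natDegree_C_mul_le _ _) ?_⟩
  simp [Polynomial.natDegree_X]

lemma Kpoly_natDegree_le (t : ℕ) : ∀ m, (Kpoly t m).natDegree ≤ m
  | 0 => by simp [Kpoly]
  | 1 => Kpoly_one_natDegree_le t
  | (m+2) => by
    rw [Kpoly]
    refine le_trans (Polynomial.natDegree_C_mul_le _ _) ?_
    refine le_trans (Polynomial.natDegree_sub_le _ _) ?_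
    rw [sup_le_iff]
    constructor
    · refine le_trans Polynomial.natDegree_mul_le ?_
      have h1 := Kpoly_one_natDegree_le t
      rw [Kpoly] at h1
      have h2 := Kpoly_natDegree_le t (m+1)
      omega
    · refine le_trans (Polynomial.natDegree_C_mul_le _ _) ?_
      have := Kpoly_natDegree_le t m
      omega

lemma esym_zero (t : ℕ) (x : Fin t → Bool) : esym t 0 x = 1 := by
  rw [esym, Finset.powersetCard_zero, Finset.sum_singleton]
  simp [chi]

lemma esym_one (t : ℕ) (x : Fin t → Bool) : esym t 1 x = (t:ℝ) - 2 * negweight x := by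
  rw [esym, Finset.powersetCard_one, Finset.sum_map, ← sum_sgnval]
  apply Finset.sum_congr rfl
  intro i _
  simp [chi]

lemma Keval (t : ℕ) : ∀ (m : ℕ) (x : Fin t → Bool),
    esym t m x = (Kpoly t m).eval ((negweight x : ℝ))
  | 0, x => by simp [esym_zero, Kpoly]
  | 1, x => by simp [esym_one, Kpoly]
  | (m+2), x => by
    have ih1 := Keval t (m+1) x
    have ih0 := Keval t m x
    have hrec := e_rec t m x
    rw [sum_sgnval] at hrec
    have hm2 : ((m:ℝ) + 2) ≠ 0 := by positivity
    rw [Kpoly]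
    simp only [Polynomial.eval_mul, Polynomial.eval_sub, Polynomial.eval_C, Polynomial.eval_X]
    rw [← ih1, ← ih0]
    field_simp
    linarith [hrec]

lemma chi_comp_perm {t : ℕ} (σ : Equiv.Perm (Fin t)) (S : Finset (Fin t)) (x : Fin t → Bool) :
    chi S (x ∘ σ) = chi (S.image σ) x := by
  rw [chi, chi, Finset.prod_image (fun a _ b _ h => σ.injective h)]
  rfl

lemma negweight_comp {t : ℕ} (σ : Equiv.Perm (Fin t)) (x : Fin t → Bool) :
    negweight (x ∘ σ) = negweight x := by
  rw [negweight, negweight]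
  apply Finset.card_nbij' (fun i => σ i) (fun j => σ.symm j)
  · intro a ha
    simp only [Finset.mem_coe, Finset.mem_filter, Finset.mem_univ, true_and, Function.comp_apply,
      Equiv.apply_symm_apply] at ha ⊢
    try exact ha
  · intro a ha
    simp only [Finset.mem_coe, Finset.mem_filter, Finset.mem_univ, true_and, Function.comp_apply,
      Equiv.apply_symm_apply] at ha ⊢
    try exact ha
  · intro a _; simp
  · intro a _; simp

lemma exists_perm_image {t : ℕ} {S T : Finset (Fin t)} (h : S.card = T.card) :
    ∃ σ : Equiv.Perm (Fin t), S.image σ = T := by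
  classical
  have hc1 : Fintype.card {a // a ∈ S} = Fintype.card {a // a ∈ T} := by
    rw [Fintype.card_coe, Fintype.card_coe, h]
  have hc2 : Fintype.card {a // ¬ a ∈ S} = Fintype.card {a // ¬ a ∈ T} := by
    rw [Fintype.card_subtype_compl, Fintype.card_subtype_compl, hc1]
  let e1 : {a // a ∈ S} ≃ {a // a ∈ T} := Fintype.equivOfCardEq hc1
  let e2 : {a // ¬ a ∈ S} ≃ {a // ¬ a ∈ T} := Fintype.equivOfCardEq hc2
  -- build permutation
  let σ : Equiv.Perm (Fin t) :=
    (Equiv.sumCompl (· ∈ S)).symm.trans ((e1.sumCongr e2).trans (Equiv.sumCompl (· ∈ T)))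
  refine ⟨σ, ?_⟩
  apply Finset.eq_of_subset_of_card_le
  · intro j hj
    obtain ⟨i, hi, rfl⟩ := Finset.mem_image.mp hj
    have : σ i = (e1 ⟨i, hi⟩ : Fin t) := by
      simp only [σ, Equiv.trans_apply]
      rw [Equiv.sumCompl_symm_apply_of_pos hi]
      rfl
    rw [this]
    exact (e1 ⟨i, hi⟩).2
  · rw [Finset.card_image_of_injective S σ.injective, h]

lemma count_eq {t : ℕ} {S T : Finset (Fin t)} (h : T.card = S.card) :
    (Finset.univ.filter fun σ : Equiv.Perm (Fin t) => S.image σ = T).card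
      = (Finset.univ.filter fun σ : Equiv.Perm (Fin t) => S.image σ = S).card := by
  classical
  obtain ⟨π, hπ⟩ := exists_perm_image h
  have hback : S.image π.symm = T := by
    rw [← hπ, Finset.image_image]
    simp
  apply Finset.card_nbij' (fun σ => σ.trans π) (fun τ => τ.trans π.symm)
  · intro σ hσ
    rw [Finset.mem_coe, Finset.mem_filter] at hσ ⊢
    refine ⟨Finset.mem_univ _, ?_⟩
    have : S.image (σ.trans π) = (S.image σ).image π := by
      rw [Finset.image_image]; rfl
    rw [this, hσ.2, hπ]
  · intro τ hτ
    rw [Finset.mem_coe, Finset.mem_filter] at hτ ⊢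
    refine ⟨Finset.mem_univ _, ?_⟩
    have : S.image (τ.trans π.symm) = (S.image τ).image π.symm := by
      rw [Finset.image_image]; rfl
    rw [this, hτ.2, hback]
  · intro σ _; ext i; simp
  · intro τ _; ext i; simp

lemma sum_perm_chi {t : ℕ} (S : Finset (Fin t)) (x : Fin t → Bool) :
    ∑ σ : Equiv.Perm (Fin t), chi (S.image σ) x
      = ((Finset.univ.filter fun σ : Equiv.Perm (Fin t) => S.image σ = S).card : ℝ)
          * esym t S.card x := by
  classical
  rw [Finset.sum_comp (fun T => chi T x) (fun σ : Equiv.Perm (Fin t) => Finset.image (⇑σ) S)]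
  have himg : (Finset.univ : Finset (Equiv.Perm (Fin t))).image
        (fun σ : Equiv.Perm (Fin t) => Finset.image (⇑σ) S)
      = Finset.powersetCard S.card Finset.univ := by
    ext T
    simp only [Finset.mem_image, Finset.mem_powersetCard_univ]
    constructor
    · rintro ⟨σ, _, rfl⟩
      exact Finset.card_image_of_injective S σ.injective
    · intro hT
      obtain ⟨σ, hσ⟩ := exists_perm_image (show S.card = T.card from hT.symm)
      exact ⟨σ, Finset.mem_univ _, hσ⟩
  rw [himg, esym, Finset.mul_sum]
  apply Finset.sum_congr rfl
  intro T hT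
  rw [count_eq (Finset.mem_powersetCard_univ.mp hT), nsmul_eq_mul]

lemma exists_point {t k : ℕ} (hk : k ≤ t) :
    negweight (fun i : Fin t => decide (k ≤ (i:ℕ))) = k := by
  classical
  have h1 : (Finset.univ.filter (fun i : Fin t => decide (k ≤ (i:ℕ)) = false))
      = (Finset.univ.filter (fun i : Fin t => (i:ℕ) < k)) := by
    apply Finset.filter_congr
    intro i _
    rw [decide_eq_false_iff_not, Nat.not_le]
  have h2 : (Finset.univ.filter (fun i : Fin t => (i:ℕ) < k)).card = (Finset.range k).card := by
    refine Finset.card_bij' (fun (i : Fin t) _ => (i:ℕ))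
      (fun (j : ℕ) (hj : j ∈ Finset.range k) =>
        (⟨j, lt_of_lt_of_le (Finset.mem_range.mp hj) hk⟩ : Fin t))
      (fun a ha => ?_) (fun j hj => ?_) (fun a ha => rfl) (fun j hj => rfl)
    · simp only [Finset.mem_filter] at ha
      exact Finset.mem_range.mpr ha.2
    · simp only [Finset.mem_filter, Finset.mem_univ, true_and]
      exact Finset.mem_range.mp hj
  rw [negweight, h1, h2, Finset.card_range]

lemma lower_le {t : ℕ} (f : (Fin t → Bool) → ℝ) (F : ℕ → ℝ)
    (hF : ∀ k ≤ t, F k = 1 ∨ F k = -1) (hsym : ∀ x, f x = F (negweight x)) {d : ℕ}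
    (c : Finset (Fin t) → ℝ) (hc : ∀ S : Finset (Fin t), d < S.card → c S = 0)
    (hpos : ∀ x, 0 < f x * ∑ S : Finset (Fin t), c S * chi S x) :
    (chg t F).card ≤ d := by
  classical
  set P : Polynomial ℝ := ∑ S : Finset (Fin t),
    Polynomial.C (c S *
      ((Finset.univ.filter fun σ : Equiv.Perm (Fin t) => S.image σ = S).card : ℝ))
        * Kpoly t S.card with hP
  have hdeg : P.natDegree ≤ d := by
    apply Polynomial.natDegree_sum_le_of_forall_le
    intro S _
    by_cases hS : d < S.card
    · rw [hc S hS]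
      simp
    · exact le_trans (Polynomial.natDegree_C_mul_le _ _)
        (le_trans (Kpoly_natDegree_le t S.card) (not_lt.mp hS))
  have hevalQ : ∀ x : Fin t → Bool, P.eval ((negweight x : ℝ))
      = ∑ σ : Equiv.Perm (Fin t), ∑ S : Finset (Fin t), c S * chi S (x ∘ σ) := by
    intro x
    rw [hP, Polynomial.eval_finset_sum]
    calc ∑ S : Finset (Fin t), (Polynomial.C (c S *
          ((Finset.univ.filter fun σ : Equiv.Perm (Fin t) => S.image σ = S).card : ℝ))
            * Kpoly t S.card).eval ((negweight x : ℝ))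
        = ∑ S : Finset (Fin t), ∑ σ : Equiv.Perm (Fin t), c S * chi (S.image σ) x := by
          refine Finset.sum_congr rfl fun S _ => ?_
          rw [Polynomial.eval_mul, Polynomial.eval_C, ← Keval t S.card x, mul_assoc,
            ← sum_perm_chi S x, Finset.mul_sum]
      _ = ∑ σ : Equiv.Perm (Fin t), ∑ S : Finset (Fin t), c S * chi (S.image σ) x :=
          Finset.sum_comm
      _ = ∑ σ : Equiv.Perm (Fin t), ∑ S : Finset (Fin t), c S * chi S (x ∘ σ) := by
          refine Finset.sum_congr rfl fun σ _ => Finset.sum_congr rfl fun S _ => ?_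
          rw [chi_comp_perm]
  have hsign : ∀ k, k ≤ t → 0 < F k * P.eval (k:ℝ) := by
    intro k hk
    set x : Fin t → Bool := fun i => decide (k ≤ (i:ℕ)) with hx
    have hwx : negweight x = k := exists_point hk
    have hQpos : 0 < f x * ∑ σ : Equiv.Perm (Fin t), ∑ S : Finset (Fin t),
        c S * chi S (x ∘ σ) := by
      rw [Finset.mul_sum]
      apply Finset.sum_pos _ Finset.univ_nonempty
      intro σ _
      have h := hpos (x ∘ ⇑σ)
      rw [hsym (x ∘ ⇑σ), negweight_comp, ← hsym x] at h
      exact h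
    rw [← hevalQ x, hsym x, hwx] at hQpos
    exact hQpos
  have hP0 : P ≠ 0 := by
    intro h0
    have := hsign 0 (Nat.zero_le t)
    rw [h0] at this
    simp at this
  have hroot : ∀ k : ℕ, ∃ z : ℝ,
      k ∈ chg t F → (z ∈ Set.Ioo (k:ℝ) ((k:ℝ)+1) ∧ P.eval z = 0) := by
    intro k
    by_cases hkC : k ∈ chg t F
    · have hkr : k < t := Finset.mem_range.mp (Finset.mem_filter.mp hkC).1
      have hne : F k ≠ F (k+1) := (Finset.mem_filter.mp hkC).2
      have hk : k ≤ t := by omega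
      have hk1 : k + 1 ≤ t := by omega
      have h1 := hsign k hk
      have h2 := hsign (k+1) hk1
      push_cast at h2
      have hop : P.eval ((k:ℝ)) * P.eval ((k:ℝ)+1) < 0 := by
        rcases hF k hk with a | a <;> rcases hF (k+1) hk1 with b | b
        · exact absurd (a.trans b.symm) hne
        · rw [a] at h1; rw [b] at h2; nlinarith
        · rw [a] at h1; rw [b] at h2; nlinarith
        · exact absurd (a.trans b.symm) hne
      have hle : (k:ℝ) ≤ (k:ℝ)+1 := by linarith
      have hcont : ContinuousOn (fun z => P.eval z) (Set.Icc (k:ℝ) ((k:ℝ)+1)) :=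
        P.continuous.continuousOn
      rcases mul_neg_iff.mp hop with ⟨hp, hq⟩ | ⟨hp, hq⟩
      · have hmem : (0:ℝ) ∈ Set.Ioo (P.eval ((k:ℝ)+1)) (P.eval (k:ℝ)) := ⟨hq, hp⟩
        obtain ⟨z, hzIoo, hz0⟩ := intermediate_value_Ioo' hle hcont hmem
        exact ⟨z, fun _ => ⟨hzIoo, hz0⟩⟩
      · have hmem : (0:ℝ) ∈ Set.Ioo (P.eval (k:ℝ)) (P.eval ((k:ℝ)+1)) := ⟨hp, hq⟩
        obtain ⟨z, hzIoo, hz0⟩ := intermediate_value_Ioo hle hcont hmem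
        exact ⟨z, fun _ => ⟨hzIoo, hz0⟩⟩
    · exact ⟨0, fun h => absurd h hkC⟩
  choose z hz using hroot
  have hmaps : ∀ k ∈ chg t F, z k ∈ P.roots.toFinset := by
    intro k hk
    rw [Multiset.mem_toFinset, Polynomial.mem_roots']
    exact ⟨hP0, (hz k hk).2⟩
  have hinj : Set.InjOn z (chg t F) := by
    intro a ha b hb hab
    rw [Finset.mem_coe] at ha hb
    by_contra hne
    rcases lt_trichotomy a b with h | h | h
    · have h1 := (hz a ha).1
      have h2 := (hz b hb).1
      rw [Set.mem_Ioo] at h1 h2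
      have hcast : (a:ℝ) + 1 ≤ (b:ℝ) := by exact_mod_cast Nat.succ_le_of_lt h
      have : z a < z b := lt_of_lt_of_le h1.2 (le_trans hcast (le_of_lt h2.1))
      rw [hab] at this
      exact lt_irrefl _ this
    · exact hne h
    · have h1 := (hz a ha).1
      have h2 := (hz b hb).1
      rw [Set.mem_Ioo] at h1 h2
      have hcast : (b:ℝ) + 1 ≤ (a:ℝ) := by exact_mod_cast Nat.succ_le_of_lt h
      have : z b < z a := lt_of_lt_of_le h2.2 (le_trans hcast (le_of_lt h1.1))
      rw [hab] at this
      exact lt_irrefl _ this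
  calc (chg t F).card ≤ P.roots.toFinset.card := Finset.card_le_card_of_injOn z hmaps hinj
    _ ≤ Multiset.card P.roots := Multiset.toFinset_card_le _
    _ ≤ P.natDegree := Polynomial.card_roots' P
    _ ≤ d := hdeg

theorem stmt9 {t : ℕ} (f : (Fin t → Bool) → ℝ) (F : ℕ → ℝ)
    (hF : ∀ k ≤ t, F k = 1 ∨ F k = -1)
    (hsym : ∀ x, f x = F (negweight x)) :
    sdeg f = ((Finset.range t).filter (fun k => F k ≠ F (k + 1))).card := by
  classical
  have hup : ((chg t F).card) ∈ {d : ℕ | ∃ c : Finset (Fin t) → ℝ,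
      (∀ S : Finset (Fin t), d < S.card → c S = 0) ∧
      ∀ x, 0 < f x * ∑ S : Finset (Fin t), c S * chi S x} := upper_mem F f hF hsym
  have hchg : (chg t F).card = ((Finset.range t).filter (fun k => F k ≠ F (k + 1))).card := rfl
  rw [sdeg, ← hchg]
  apply le_antisymm
  · exact Nat.sInf_le hup
  · obtain ⟨c, hc, hpos⟩ := Nat.sInf_mem (⟨_, hup⟩ : Set.Nonempty _)
    exact lower_le f F hF hsym c hc hpos
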